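/- Let G be a countable discrete group, X a locally compact Hausdorff space with a proper, cocompact G-action, c a cut-off function on X (compactly supported, continuous, nonnegative, with ∑_{h∈G} c(h⁻¹·x)² = 1 for every x), π : C₀(X) → B(H) a nondegenerate covariant representation on the G-Hilbert space H, and V : H → ℓ²(G, H) the isometry (Vv)_h = π(c) u_h v. Let T ∈ B(H) and let T̄ be the bounded operator on ℓ²(G, H) defined by (T̄ξ)_g = u_g T u_g⁻¹ ξ_g. Then V* T̄ V = ∑_{h∈G} π(h·c) T π(h·c), the sum on the right converging in the strong operator topology. Consequently, if ∑_{h∈G} π(h·c) T π(h·c) − T is a compact operator on H, then V* T̄ V − T is compact. -/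

import Mathlib

open scoped ZeroAtInfty
open Filter MeasureTheory Topology

noncomputable section

variable {G : Type*} [Group G] [Countable G] [TopologicalSpace G] [DiscreteTopology G]
variable {X : Type*} [TopologicalSpace X] [LocallyCompactSpace X] [T2Space X]
variable [MulAction G X] [ContinuousConstSMul G X]
variable {H : Type*} [NormedAddCommGroup H] [InnerProductSpace ℂ H] [CompleteSpace H]
  [SecondCountableTopology H]

/-- The translation action of `G` on `C₀(X, ℂ)`: `(g • φ)(x) = φ(g⁻¹ • x)`. -/
def C0smul (g : G) (φ : C₀(X, ℂ)) : C₀(X, ℂ) where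
  toFun := fun x => φ (g⁻¹ • x)
  continuous_toFun := φ.continuous.comp (continuous_const_smul g⁻¹)
  zero_at_infty' := φ.zero_at_infty'.comp
    ((Homeomorph.smul (g⁻¹ : G)).toCocompactMap.cocompact_tendsto')

/-- Conjugation `g(T) = u_g T u_g⁻¹` by the unitary representation `u`. -/
def conjU (u : G →* unitary (H →L[ℂ] H)) (g : G) (T : H →L[ℂ] H) : H →L[ℂ] H :=
  (u g : H →L[ℂ] H) * T * ((u g⁻¹ : unitary (H →L[ℂ] H)) : H →L[ℂ] H)

/-- The Hilbert space `ℓ²(G, H)`. -/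
abbrev l2GH (G H : Type*) [NormedAddCommGroup H] [InnerProductSpace ℂ H] : Type _ :=
  lp (fun _ : G => H) 2

theorem statement_14
    (u : G →* unitary (H →L[ℂ] H))
    (π : C₀(X, ℂ) →⋆ₙₐ[ℂ] (H →L[ℂ] H))
    (hπnd : Dense (Submodule.span ℂ (Set.range fun p : C₀(X, ℂ) × H => π p.1 p.2) : Set H))
    (hcov : ∀ (g : G) (φ : C₀(X, ℂ)),
      (u g : H →L[ℂ] H) * π φ * ((u g⁻¹ : unitary (H →L[ℂ] H)) : H →L[ℂ] H) = π (C0smul g φ))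
    (hproper : IsProperMap fun p : G × X => (p.1 • p.2, p.2))
    (hcocompact : CompactSpace (Quotient (MulAction.orbitRel G X)))
    (c : C₀(X, ℂ)) (hcs : HasCompactSupport (⇑c))
    (hc_real : ∀ x : X, (c x).im = 0) (hc_nonneg : ∀ x : X, 0 ≤ (c x).re)
    (hc_sum : ∀ x : X, HasSum (fun h : G => c (h⁻¹ • x) ^ 2) 1)
    (V : H →L[ℂ] l2GH G H)
    (hViso : ∀ v : H, ‖V v‖ = ‖v‖)
    (hV : ∀ (v : H) (h : G), (V v) h = π c ((u h : H →L[ℂ] H) v))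
    (T : H →L[ℂ] H) (Tbar : l2GH G H →L[ℂ] l2GH G H)
    (hTbar : ∀ (ξ : l2GH G H) (g : G), (Tbar ξ) g = conjU u g T (ξ g)) :
    (∀ v : H,
      HasSum (fun h : G => π (C0smul h c) (T (π (C0smul h c) v)))
        (((ContinuousLinearMap.adjoint V).comp (Tbar.comp V)) v)) ∧
    (∀ S : H →L[ℂ] H,
      (∀ v : H, HasSum (fun h : G => π (C0smul h c) (T (π (C0smul h c) v))) (S v)) →
      IsCompactOperator (⇑(S - T)) →
      IsCompactOperator (⇑((ContinuousLinearMap.adjoint V).comp (Tbar.comp V) - T))) := by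
  classical
  -- `c` is self-adjoint, hence so is `π c`.
  have hc_star : star c = c := by
    ext x
    have : starRingEnd ℂ (c x) = c x := by
      apply Complex.ext <;> simp [hc_real x]
    simpa using this
  have hπc_star : ContinuousLinearMap.adjoint (π c) = π c := by
    rw [← ContinuousLinearMap.star_eq_adjoint, ← map_star, hc_star]
  -- the adjoint of `u h` is `u h⁻¹`
  have hUadj : ∀ h : G, ContinuousLinearMap.adjoint ((u h : H →L[ℂ] H)) =
      ((u h⁻¹ : unitary (H →L[ℂ] H)) : H →L[ℂ] H) := by
    intro h
    rw [← ContinuousLinearMap.star_eq_adjoint, ← Unitary.coe_star, Unitary.star_eq_inv,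
      ← map_inv]
  -- the adjoint of V on a single basis element
  have hVadj_single : ∀ (h : G) (w : H),
      (ContinuousLinearMap.adjoint V) (lp.single 2 h w) =
        ((u h⁻¹ : unitary (H →L[ℂ] H)) : H →L[ℂ] H) (π c w) := by
    intro h w
    apply ext_inner_right ℂ
    intro z
    rw [ContinuousLinearMap.adjoint_inner_left, lp.inner_single_left, hV z h]
    calc (inner ℂ w (π c ((u h : H →L[ℂ] H) z)) : ℂ)
        = inner ℂ ((ContinuousLinearMap.adjoint (π c)) w) ((u h : H →L[ℂ] H) z) := by
          rw [ContinuousLinearMap.adjoint_inner_left]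
      _ = inner ℂ (π c w) ((u h : H →L[ℂ] H) z) := by rw [hπc_star]
      _ = inner ℂ ((ContinuousLinearMap.adjoint ((u h : H →L[ℂ] H))) (π c w)) z := by
          rw [ContinuousLinearMap.adjoint_inner_left]
      _ = inner ℂ (((u h⁻¹ : unitary (H →L[ℂ] H)) : H →L[ℂ] H) (π c w)) z := by rw [hUadj]
  -- the main computation
  have main : ∀ v : H,
      HasSum (fun h : G => π (C0smul h c) (T (π (C0smul h c) v)))
        (((ContinuousLinearMap.adjoint V).comp (Tbar.comp V)) v) := by
    intro v
    set ξ : l2GH G H := Tbar (V v) with hξ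
    have h1 : HasSum (fun h : G => lp.single 2 h (ξ h)) ξ :=
      lp.hasSum_single (by norm_num) ξ
    have h2 : HasSum (fun h : G => (ContinuousLinearMap.adjoint V) (lp.single 2 h (ξ h)))
        ((ContinuousLinearMap.adjoint V) ξ) := (ContinuousLinearMap.adjoint V).hasSum h1
    have key : ∀ h : G, (ContinuousLinearMap.adjoint V) (lp.single 2 h (ξ h)) =
        π (C0smul h⁻¹ c) (T (π (C0smul h⁻¹ c) v)) := by
      intro h
      rw [hVadj_single]
      have hcc : π (C0smul h⁻¹ c) = ((u h⁻¹ : unitary (H →L[ℂ] H)) : H →L[ℂ] H) * π c *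
          ((u h : H →L[ℂ] H)) := by
        rw [← hcov h⁻¹ c, inv_inv]
      have hξh : ξ h = (u h : H →L[ℂ] H)
          (T (((u h⁻¹ : unitary (H →L[ℂ] H)) : H →L[ℂ] H) (π c ((u h : H →L[ℂ] H) v)))) := by
        rw [hξ, hTbar, hV, conjU]
        rfl
      rw [hξh, hcc]
      rfl
    have h3 : HasSum (fun h : G => π (C0smul h⁻¹ c) (T (π (C0smul h⁻¹ c) v)))
        ((ContinuousLinearMap.adjoint V) ξ) := by
      simpa only [key] using h2
    have h4 := (Equiv.hasSum_iff (Equiv.inv G)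
      (f := fun h : G => π (C0smul h c) (T (π (C0smul h c) v)))
      (a := (ContinuousLinearMap.adjoint V) ξ)).mp ?_
    · exact h4
    · exact h3
  refine ⟨main, fun S hS hcpt => ?_⟩
  have hSeq : S = (ContinuousLinearMap.adjoint V).comp (Tbar.comp V) :=
    ContinuousLinearMap.ext fun v => (hS v).unique (main v)
  rwa [← hSeq]

end
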